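/- arXiv:0812.4167 — 2 statements merged into one kernel-verified Lean document; each statement's English description precedes it below -/
import Mathlib

section
/- Every density operator ρ on H = H_A ⊗ H_B admits an operator Schmidt decomposition ρ = Σ_{a=1}^{d} μ_a E_a^A ⊗ E_a^B, μ_a ≥ 0, in which the local orthonormal systems {E_a^A} and {E_a^B} consist of self-adjoint operators (orthonormal with respect to the real Hilbert-Schmidt inner product on the real vector spaces of self-adjoint operators on H_A and H_B); consequently each Schmidt coefficient is expressible as an expectation value μ_a = tr((E_a^A ⊗ E_a^B) ρ) of a local observable. -/
open scoped Kronecker ComplexOrder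
open Matrix Finset

/-- Hilbert-Schmidt inner product on matrices. -/
noncomputable def hsInner {n : Type*} [Fintype n] (A B : Matrix n n ℂ) : ℂ :=
  (Aᴴ * B).trace

/-- Hilbert-Schmidt norm. -/
noncomputable def hsNorm {n : Type*} [Fintype n] (A : Matrix n n ℂ) : ℝ :=
  Real.sqrt (hsInner A A).re

/-- A density operator: positive semidefinite with unit trace. -/
def IsDensity {n : Type*} [Fintype n] (ρ : Matrix n n ℂ) : Prop :=
  ρ.PosSemidef ∧ ρ.trace = 1

/-- An operator Schmidt decomposition of a bipartite operator `C`: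
`C = ∑ a, μ a • (E a ⊗ₖ F a)` with `μ a ≥ 0` and `E`, `F` orthonormal families
with respect to the Hilbert-Schmidt inner product. -/
def SchmidtDecomp {NA NB : ℕ} (C : Matrix (Fin NA × Fin NB) (Fin NA × Fin NB) ℂ)
    (μ : Fin (min (NA ^ 2) (NB ^ 2)) → ℝ)
    (E : Fin (min (NA ^ 2) (NB ^ 2)) → Matrix (Fin NA) (Fin NA) ℂ)
    (F : Fin (min (NA ^ 2) (NB ^ 2)) → Matrix (Fin NB) (Fin NB) ℂ) : Prop :=
  (∀ a, 0 ≤ μ a) ∧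
  (∀ a b, hsInner (E a) (E b) = if a = b then 1 else 0) ∧
  (∀ a b, hsInner (F a) (F b) = if a = b then 1 else 0) ∧
  C = ∑ a, (μ a : ℂ) • (E a ⊗ₖ F a)

section basics
variable {n m : Type*} [Fintype n] [Fintype m]

lemma hsInner_apply (A B : Matrix n n ℂ) :
    hsInner A B = ∑ p : n × n, (starRingEnd ℂ) (A p.1 p.2) * B p.1 p.2 := by
  rw [hsInner, Matrix.trace, Fintype.sum_prod_type]
  simp only [Matrix.diag_apply, Matrix.mul_apply, Matrix.conjTranspose_apply]
  rw [Finset.sum_comm]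
  exact Finset.sum_congr rfl fun p _ => Finset.sum_congr rfl fun q _ => by
    rw [starRingEnd_apply, mul_comm]

lemma hsInner_smul_left (c : ℂ) (A B : Matrix n n ℂ) :
    hsInner (c • A) B = (starRingEnd ℂ) c * hsInner A B := by
  simp [hsInner_apply, Finset.mul_sum, mul_assoc]

lemma hsInner_smul_right (c : ℂ) (A B : Matrix n n ℂ) :
    hsInner A (c • B) = c * hsInner A B := by
  simp only [hsInner_apply, Matrix.smul_apply, smul_eq_mul, Finset.mul_sum]
  exact Finset.sum_congr rfl fun p _ => by ring

lemma hsInner_add_left (A A' B : Matrix n n ℂ) :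
    hsInner (A + A') B = hsInner A B + hsInner A' B := by
  simp [hsInner_apply, add_mul, Finset.sum_add_distrib]

lemma hsInner_add_right (A B B' : Matrix n n ℂ) :
    hsInner A (B + B') = hsInner A B + hsInner A B' := by
  simp [hsInner_apply, mul_add, Finset.sum_add_distrib]

lemma hsInner_sub_left (A A' B : Matrix n n ℂ) :
    hsInner (A - A') B = hsInner A B - hsInner A' B := by
  simp [hsInner_apply, sub_mul, Finset.sum_sub_distrib]

lemma hsInner_sub_right (A B B' : Matrix n n ℂ) :
    hsInner A (B - B') = hsInner A B - hsInner A B' := by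
  simp [hsInner_apply, mul_sub, Finset.sum_sub_distrib]

lemma hsInner_sum_left {ι : Type*} (s : Finset ι) (A : ι → Matrix n n ℂ) (B : Matrix n n ℂ) :
    hsInner (∑ i ∈ s, A i) B = ∑ i ∈ s, hsInner (A i) B := by
  simp only [hsInner_apply, Matrix.sum_apply, map_sum, Finset.sum_mul]
  rw [Finset.sum_comm]

lemma hsInner_sum_right {ι : Type*} (s : Finset ι) (A : Matrix n n ℂ) (B : ι → Matrix n n ℂ) :
    hsInner A (∑ i ∈ s, B i) = ∑ i ∈ s, hsInner A (B i) := by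
  simp only [hsInner_apply, Matrix.sum_apply, Finset.mul_sum]
  rw [Finset.sum_comm]

lemma conjTranspose_kron (A : Matrix n n ℂ) (B : Matrix m m ℂ) :
    (A ⊗ₖ B)ᴴ = Aᴴ ⊗ₖ Bᴴ := by
  ext ⟨i, j⟩ ⟨k, l⟩
  simp [Matrix.conjTranspose_apply, Matrix.kroneckerMap_apply]

lemma hsInner_kronecker (A C : Matrix n n ℂ) (B D : Matrix m m ℂ) :
    hsInner (A ⊗ₖ B) (C ⊗ₖ D) = hsInner A C * hsInner B D := by
  rw [hsInner, conjTranspose_kron, ← Matrix.mul_kronecker_mul, Matrix.trace_kronecker,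
    hsInner, hsInner]

lemma hsInner_real_of_hermitian {A B : Matrix n n ℂ} (hA : A.IsHermitian) (hB : B.IsHermitian) :
    (starRingEnd ℂ) (hsInner A B) = hsInner A B := by
  rw [hsInner, starRingEnd_apply, ← Matrix.trace_conjTranspose, conjTranspose_mul,
    conjTranspose_conjTranspose, hB.eq, Matrix.trace_mul_comm, hA.eq]
section expand
variable {m : Type*} [Fintype m] [DecidableEq m]

/-- Matrices as a Euclidean space, matching `hsInner` with the inner product. -/
noncomputable def matEuc (m : Type*) [Fintype m] :
    Matrix m m ℂ ≃ₗ[ℂ] EuclideanSpace ℂ (m × m) where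
  toFun A := (WithLp.equiv 2 _).symm (fun p => A p.1 p.2)
  invFun x := Matrix.of fun i j => x (i, j)
  map_add' _ _ := rfl
  map_smul' _ _ := rfl
  left_inv _ := rfl
  right_inv _ := rfl

lemma matEuc_apply (A : Matrix m m ℂ) (p : m × m) : matEuc m A p = A p.1 p.2 := rfl

lemma matEuc_inner (A B : Matrix m m ℂ) :
    (inner ℂ (matEuc m A) (matEuc m B) : ℂ) = hsInner A B := by
  rw [hsInner_apply, PiLp.inner_apply]
  refine Finset.sum_congr rfl fun p _ => ?_
  rw [RCLike.inner_apply, matEuc_apply, matEuc_apply, starRingEnd_apply, mul_comm]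

lemma expand_of_orthonormal {ι : Type*} [Fintype ι] [DecidableEq ι] [Nonempty ι]
    (K : ι → Matrix m m ℂ)
    (horth : ∀ a b, hsInner (K a) (K b) = if a = b then 1 else 0)
    (hcard : Fintype.card ι = Fintype.card m * Fintype.card m)
    (X : Matrix m m ℂ) :
    X = ∑ a, hsInner (K a) X • K a := by
  classical
  set v : ι → EuclideanSpace ℂ (m × m) := fun a => matEuc m (K a) with hv
  have hon : Orthonormal ℂ v := by
    rw [orthonormal_iff_ite]
    intro a b
    rw [hv]
    simp only [matEuc_inner, horth a b]
  have hfr : Module.finrank ℂ (EuclideanSpace ℂ (m × m)) = Fintype.card ι := by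
    simp [finrank_euclideanSpace, Fintype.card_prod, hcard]
  have hli := hon.linearIndependent
  let b := basisOfLinearIndependentOfCardEqFinrank hli hfr.symm
  have hb : ⇑b = v := coe_basisOfLinearIndependentOfCardEqFinrank hli hfr.symm
  have hspan : ⊤ ≤ Submodule.span ℂ (Set.range v) := by
    rw [← hb]; exact le_of_eq b.span_eq.symm
  let ob : OrthonormalBasis ι ℂ (EuclideanSpace ℂ (m × m)) := OrthonormalBasis.mk hon hspan
  have hob : ∀ a, ob a = v a := fun a => by simp [ob, OrthonormalBasis.coe_mk]
  have hx := ob.sum_repr (matEuc m X)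
  have hx2 : ∑ a, (inner ℂ (v a) (matEuc m X) : ℂ) • v a = matEuc m X := by
    rw [← hx]
    refine Finset.sum_congr rfl fun a _ => ?_
    rw [hx, ob.repr_apply_apply, hob]
  have h3 := congrArg (matEuc m).symm hx2
  rw [map_sum, LinearEquiv.symm_apply_apply] at h3
  conv_lhs => rw [← h3]
  refine Finset.sum_congr rfl fun a _ => ?_
  rw [LinearEquiv.map_smul, LinearEquiv.symm_apply_apply, matEuc_inner]

end expand
section hermbasis

variable {n : Type*} [Fintype n] [DecidableEq n]

lemma stdBasis_conjT (i j : n) :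
    (Matrix.single i j (1 : ℂ))ᴴ = Matrix.single j i 1 := by
  ext a b
  simp [Matrix.conjTranspose_apply, Matrix.single, Matrix.of_apply, and_comm]

lemma trace_std (i k : n) (c : ℂ) :
    (Matrix.single i k c).trace = if i = k then c else 0 := by
  rw [Matrix.trace]
  rcases eq_or_ne i k with h | h
  · subst h
    rw [if_pos rfl]
    rw [Finset.sum_eq_single i (fun b _ hb => by simp [Matrix.single, hb.symm])
      (by simp)]
    simp [Matrix.single]
  · rw [if_neg h]
    refine Finset.sum_eq_zero fun b _ => ?_
    simp only [Matrix.diag_apply, Matrix.single, Matrix.of_apply]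
    rw [if_neg]
    rintro ⟨rfl, rfl⟩
    exact h rfl

lemma hsInner_std (i j k l : n) :
    hsInner (Matrix.single i j (1 : ℂ)) (Matrix.single k l 1)
      = if i = k ∧ j = l then 1 else 0 := by
  rw [hsInner, stdBasis_conjT]
  rcases eq_or_ne i k with h | h
  · subst h
    rw [Matrix.single_mul_single_same, trace_std]
    simp [eq_comm]
  · rw [Matrix.single_mul_single_of_ne (h := h), Matrix.trace_zero, if_neg (fun hh => h hh.1)]

/-- coefficient fact -/
lemma sqrt2_inv_sq : (((Real.sqrt 2 : ℝ) : ℂ))⁻¹ * (((Real.sqrt 2 : ℝ) : ℂ))⁻¹ = 2⁻¹ := by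
  rw [← mul_inv, ← Complex.ofReal_mul, Real.mul_self_sqrt (by norm_num)]
  norm_num

/-- The standard self-adjoint orthonormal family on `Matrix n n ℂ` for a linearly ordered `n`. -/
noncomputable def hermBasis [LinearOrder n] : n × n → Matrix n n ℂ := fun x =>
  if x.1 = x.2 then Matrix.single x.1 x.1 1
  else if x.1 < x.2 then
    (((Real.sqrt 2 : ℝ) : ℂ))⁻¹ • (Matrix.single x.1 x.2 1 + Matrix.single x.2 x.1 1)
  else
    (((Real.sqrt 2 : ℝ) : ℂ))⁻¹ •
      (Complex.I • Matrix.single x.1 x.2 1 - Complex.I • Matrix.single x.2 x.1 1)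

lemma hermBasis_isHermitian [LinearOrder n] (x : n × n) : (hermBasis x).IsHermitian := by
  obtain ⟨p, q⟩ := x
  unfold Matrix.IsHermitian
  have hst : star ((((Real.sqrt 2 : ℝ) : ℂ))⁻¹) = (((Real.sqrt 2 : ℝ) : ℂ))⁻¹ := by
    rw [star_inv₀, ← starRingEnd_apply, Complex.conj_ofReal]
  rcases lt_trichotomy p q with h | h | h
  · simp only [hermBasis, if_neg h.ne, if_pos h]
    rw [Matrix.conjTranspose_smul, Matrix.conjTranspose_add, stdBasis_conjT, stdBasis_conjT,
      hst, add_comm]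
  · subst h
    simp [hermBasis, stdBasis_conjT]
  · simp only [hermBasis, if_neg h.ne', if_neg (not_lt.mpr h.le)]
    rw [Matrix.conjTranspose_smul, Matrix.conjTranspose_sub, Matrix.conjTranspose_smul,
      Matrix.conjTranspose_smul, stdBasis_conjT, stdBasis_conjT, hst,
      show star Complex.I = -Complex.I by simp [Complex.star_def]]
    module

end hermbasis
section hermorth
variable {n : Type*} [Fintype n] [DecidableEq n]

lemma conj_sqrt2_inv :
    (starRingEnd ℂ) ((((Real.sqrt 2 : ℝ) : ℂ))⁻¹) = (((Real.sqrt 2 : ℝ) : ℂ))⁻¹ := by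
  rw [map_inv₀, Complex.conj_ofReal]

lemma hermBasis_orthonormal [LinearOrder n] (x y : n × n) :
    hsInner (hermBasis x) (hermBasis y) = if x = y then 1 else 0 := by
  obtain ⟨p, q⟩ := x
  obtain ⟨r, s⟩ := y
  have h2 : (((Real.sqrt 2 : ℝ) : ℂ))⁻¹ * (((Real.sqrt 2 : ℝ) : ℂ))⁻¹ = 2⁻¹ := sqrt2_inv_sq
  rcases lt_trichotomy p q with h1 | h1 | h1 <;> rcases lt_trichotomy r s with hrs | hrs | hrs
  · -- p < q, r < s
    have f1 : ¬(p = s ∧ q = r) := by rintro ⟨a, b⟩; subst a; subst b; exact lt_asymm h1 hrs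
    have f2 : ¬(q = r ∧ p = s) := fun ⟨a, b⟩ => f1 ⟨b, a⟩
    simp only [hermBasis, if_neg h1.ne, if_pos h1, if_neg hrs.ne, if_pos hrs,
      hsInner_smul_left, hsInner_smul_right, hsInner_add_left, hsInner_add_right,
      hsInner_std, conj_sqrt2_inv, Prod.mk.injEq, if_neg f1, if_neg f2]
    by_cases hc : p = r ∧ q = s
    · rw [if_pos hc, if_pos (show q = s ∧ p = r from ⟨hc.2, hc.1⟩)]
      linear_combination (2 : ℂ) * h2
    · rw [if_neg hc, if_neg (fun hh : q = s ∧ p = r => hc ⟨hh.2, hh.1⟩)]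
      ring
  · -- p < q, r = s
    subst hrs
    have f1 : ¬(p = r ∧ q = r) := by rintro ⟨a, b⟩; subst a; subst b; exact lt_irrefl _ h1
    have f2 : ¬(q = r ∧ p = r) := fun ⟨a, b⟩ => f1 ⟨b, a⟩
    have f3 : ¬((p, q) = (r, r)) := by rintro h; rw [Prod.mk.injEq] at h; exact f1 h
    simp only [hermBasis, if_neg h1.ne, if_pos h1, if_pos rfl, eq_self_iff_true, if_true,
      hsInner_smul_left, hsInner_add_left, hsInner_std, conj_sqrt2_inv,
      if_neg f1, if_neg f2, if_neg f3]
    ring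
  · -- p < q, r > s
    have f1 : ¬(p = r ∧ q = s) := by rintro ⟨a, b⟩; subst a; subst b; exact lt_asymm h1 hrs
    have f4 : ¬(q = s ∧ p = r) := fun ⟨a, b⟩ => f1 ⟨b, a⟩
    have f5 : ¬((p, q) = (r, s)) := by rintro h; rw [Prod.mk.injEq] at h; exact f1 h
    simp only [hermBasis, if_neg h1.ne, if_pos h1, if_neg hrs.ne', if_neg (not_lt.mpr hrs.le),
      hsInner_smul_left, hsInner_smul_right, hsInner_add_left, hsInner_add_right,
      hsInner_sub_right, hsInner_std, conj_sqrt2_inv, Prod.mk.injEq,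
      if_neg f1, if_neg f4, if_neg f5]
    by_cases hc : p = s ∧ q = r
    · rw [if_pos hc, if_pos ⟨hc.2, hc.1⟩]
      ring
    · rw [if_neg hc, if_neg (fun hh : q = r ∧ p = s => hc ⟨hh.2, hh.1⟩)]
      ring
  · -- p = q, r < s
    subst h1
    have f1 : ¬(p = r ∧ p = s) := by rintro ⟨a, b⟩; subst a; subst b; exact lt_irrefl _ hrs
    have f2 : ¬(p = s ∧ p = r) := fun ⟨a, b⟩ => f1 ⟨b, a⟩
    have f3 : ¬((p, p) = (r, s)) := by rintro h; rw [Prod.mk.injEq] at h; exact f1 h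
    simp only [hermBasis, if_pos rfl, eq_self_iff_true, if_true, if_neg hrs.ne, if_pos hrs,
      hsInner_smul_right, hsInner_add_right, hsInner_std, if_neg f1, if_neg f2, if_neg f3]
    ring
  · -- p = q, r = s
    subst h1; subst hrs
    simp only [hermBasis, if_pos rfl, eq_self_iff_true, if_true, hsInner_std,
      Prod.mk.injEq, and_self]
  · -- p = q, r > s
    subst h1
    have f1 : ¬(p = r ∧ p = s) := by rintro ⟨a, b⟩; subst a; subst b; exact lt_irrefl _ hrs
    have f2 : ¬(p = s ∧ p = r) := fun ⟨a, b⟩ => f1 ⟨b, a⟩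
    have f3 : ¬((p, p) = (r, s)) := by rintro h; rw [Prod.mk.injEq] at h; exact f1 h
    simp only [hermBasis, if_pos rfl, eq_self_iff_true, if_true, if_neg hrs.ne',
      if_neg (not_lt.mpr hrs.le),
      hsInner_smul_right, hsInner_sub_right, hsInner_smul_right, hsInner_std,
      if_neg f1, if_neg f2, if_neg f3]
    ring
  · -- p > q, r < s
    have f1 : ¬(p = r ∧ q = s) := by rintro ⟨a, b⟩; subst a; subst b; exact lt_asymm h1 hrs
    have f4 : ¬(q = s ∧ p = r) := fun ⟨a, b⟩ => f1 ⟨b, a⟩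
    have f5 : ¬((p, q) = (r, s)) := by rintro h; rw [Prod.mk.injEq] at h; exact f1 h
    simp only [hermBasis, if_neg h1.ne', if_neg (not_lt.mpr h1.le), if_neg hrs.ne, if_pos hrs,
      hsInner_smul_left, hsInner_smul_right, hsInner_add_right, hsInner_sub_left,
      hsInner_std, conj_sqrt2_inv, Complex.conj_I, Prod.mk.injEq,
      if_neg f1, if_neg f4, if_neg f5]
    by_cases hc : p = s ∧ q = r
    · rw [if_pos hc, if_pos ⟨hc.2, hc.1⟩]
      ring
    · rw [if_neg hc, if_neg (fun hh : q = r ∧ p = s => hc ⟨hh.2, hh.1⟩)]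
      ring
  · -- p > q, r = s
    subst hrs
    have f1 : ¬(p = r ∧ q = r) := by rintro ⟨a, b⟩; subst a; subst b; exact lt_irrefl _ h1
    have f2 : ¬(q = r ∧ p = r) := fun ⟨a, b⟩ => f1 ⟨b, a⟩
    have f3 : ¬((p, q) = (r, r)) := by rintro h; rw [Prod.mk.injEq] at h; exact f1 h
    simp only [hermBasis, if_neg h1.ne', if_neg (not_lt.mpr h1.le), if_pos rfl,
      eq_self_iff_true, if_true,
      hsInner_smul_left, hsInner_sub_left, hsInner_smul_left, hsInner_std,
      conj_sqrt2_inv, Complex.conj_I, if_neg f1, if_neg f2, if_neg f3]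
    ring
  · -- p > q, r > s
    have f1 : ¬(p = s ∧ q = r) := by rintro ⟨a, b⟩; subst a; subst b; exact lt_asymm h1 hrs
    have f2 : ¬(q = r ∧ p = s) := fun ⟨a, b⟩ => f1 ⟨b, a⟩
    simp only [hermBasis, if_neg h1.ne', if_neg (not_lt.mpr h1.le), if_neg hrs.ne',
      if_neg (not_lt.mpr hrs.le),
      hsInner_smul_left, hsInner_smul_right, hsInner_sub_left, hsInner_sub_right,
      hsInner_std, conj_sqrt2_inv, Complex.conj_I, Prod.mk.injEq, if_neg f1, if_neg f2]
    by_cases hc : p = r ∧ q = s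
    · rw [if_pos hc, if_pos (show q = s ∧ p = r from ⟨hc.2, hc.1⟩)]
      have hI : Complex.I ^ 2 = -1 := Complex.I_sq
      linear_combination (2 : ℂ) * h2 +
        (-2 * ((((Real.sqrt 2 : ℝ) : ℂ))⁻¹ * (((Real.sqrt 2 : ℝ) : ℂ))⁻¹)) * hI
    · rw [if_neg hc, if_neg (fun hh : q = s ∧ p = r => hc ⟨hh.2, hh.1⟩)]
      ring
end hermorth
section svd
variable {I J : Type*} [Fintype I] [Fintype J] [DecidableEq I] [DecidableEq J]

lemma svd_core (M : Matrix I J ℝ) (hIJ : Fintype.card J ≤ Fintype.card I) :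
    ∃ (σ : J → ℝ) (u : J → I → ℝ) (v : J → J → ℝ),
      (∀ a, 0 ≤ σ a) ∧
      (∀ a b, ∑ i, u a i * u b i = if a = b then 1 else 0) ∧
      (∀ a b, ∑ j, v a j * v b j = if a = b then 1 else 0) ∧
      (∀ i j, M i j = ∑ a, σ a * u a i * v a j) := by
  classical
  rcases isEmpty_or_nonempty J with hJ | hJ
  · exact ⟨fun _ => 0, fun _ => 0, fun _ => 0, fun a => isEmptyElim a, fun a => isEmptyElim a,
      fun a => isEmptyElim a, fun i j => isEmptyElim j⟩
  have hNpsd : (Mᴴ * M).PosSemidef := Matrix.posSemidef_conjTranspose_mul_self M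
  have hN : (Mᴴ * M).IsHermitian := hNpsd.1
  set B := hN.eigenvectorBasis with hB
  set lam := hN.eigenvalues with hlamdef
  have hlam : ∀ a, 0 ≤ lam a := hNpsd.eigenvalues_nonneg
  set v : J → J → ℝ := fun a => ⇑(B a) with hv
  have hvon : ∀ a b, ∑ j, v a j * v b j = if a = b then 1 else 0 := by
    intro a b
    have := B.orthonormal
    rw [orthonormal_iff_ite] at this
    have h := this a b
    rw [PiLp.inner_apply] at h
    simpa [RCLike.inner_apply, starRingEnd_apply, mul_comm] using h
  set σ : J → ℝ := fun a => Real.sqrt (lam a) with hσ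
  have hσ0 : ∀ a, 0 ≤ σ a := fun a => Real.sqrt_nonneg _
  have hσ2 : ∀ a, σ a * σ a = lam a := fun a => Real.mul_self_sqrt (hlam a)
  set Mv : J → I → ℝ := fun a => M *ᵥ v a with hMv
  -- key inner product identity
  have key : ∀ a b, ∑ i, Mv a i * Mv b i = lam b * (if a = b then 1 else 0) := by
    intro a b
    have h1 : ∑ i, Mv a i * Mv b i = Mv a ⬝ᵥ (M *ᵥ v b) := rfl
    rw [h1, Matrix.dotProduct_mulVec, hMv]
    have h2 : (M *ᵥ v a) ᵥ* M = (Mᴴ * M) *ᵥ v a := by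
      rw [Matrix.conjTranspose_eq_transpose_of_trivial, ← Matrix.mulVec_transpose,
        Matrix.mulVec_mulVec]
    rw [h2]
    have h3 : (Mᴴ * M) *ᵥ v a = lam a • v a := by
      rw [hv, hlamdef, hB]
      exact hN.mulVec_eigenvectorBasis a
    rw [h3]
    have h4 : (lam a • v a) ⬝ᵥ v b = lam a * ∑ j, v a j * v b j := by
      simp [dotProduct, Finset.mul_sum, mul_assoc]
    rw [h4, hvon a b]
    by_cases hab : a = b
    · subst hab; simp
    · simp [hab]
  have hMv0 : ∀ a, σ a = 0 → Mv a = 0 := by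
    intro a ha
    have hz : ∑ i, Mv a i * Mv a i = 0 := by
      rw [key a a, if_pos rfl, ← hσ2 a, ha]; ring
    funext i
    have := (Finset.sum_eq_zero_iff_of_nonneg
      (fun i _ => mul_self_nonneg (Mv a i))).mp hz i (Finset.mem_univ i)
    exact mul_self_eq_zero.mp this
  -- embedding J into I
  obtain ⟨f⟩ : Nonempty (J ↪ I) := Function.Embedding.nonempty_iff_card_le.mpr hIJ
  set u0 : J → I → ℝ := fun a => if σ a = 0 then 0 else (σ a)⁻¹ • Mv a with hu0
  have hu0on : ∀ a b, σ a ≠ 0 → σ b ≠ 0 → ∑ i, u0 a i * u0 b i = if a = b then 1 else 0 := by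
    intro a b ha hb
    rw [hu0]
    simp only [if_neg ha, if_neg hb, Pi.smul_apply, smul_eq_mul]
    have : ∑ i, (σ a)⁻¹ * Mv a i * ((σ b)⁻¹ * Mv b i)
        = (σ a)⁻¹ * (σ b)⁻¹ * ∑ i, Mv a i * Mv b i := by
      rw [Finset.mul_sum]; exact Finset.sum_congr rfl fun i _ => by ring
    rw [this, key a b]
    by_cases hab : a = b
    · subst hab
      rw [if_pos rfl, ← hσ2 a]
      field_simp
    · simp [hab]
  set s : Set I := f '' {a | σ a ≠ 0} with hs
  set w : I → EuclideanSpace ℝ I :=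
    fun i => (WithLp.equiv 2 _).symm (u0 (Function.invFun f i)) with hw
  have hinv : ∀ a : J, Function.invFun f (f a) = a :=
    Function.leftInverse_invFun f.injective
  have hwon : Orthonormal ℝ (s.restrict w) := by
    rw [orthonormal_iff_ite]
    rintro ⟨i1, hi1⟩ ⟨i2, hi2⟩
    obtain ⟨a1, ha1, rfl⟩ := hi1
    obtain ⟨a2, ha2, rfl⟩ := hi2
    rw [PiLp.inner_apply]
    simp only [Set.restrict_apply, hw, hinv, WithLp.equiv_symm_apply, PiLp.toLp_apply, WithLp.ofLp_toLp, RCLike.inner_apply,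
      starRingEnd_apply, star_trivial]
    change ∑ x, u0 (Function.invFun f (f a2)) x * u0 (Function.invFun f (f a1)) x = _
    simp only [hinv, mul_comm (u0 a2 _)]
    rw [hu0on a1 a2 ha1 ha2]
    by_cases h12 : a1 = a2
    · subst h12; simp
    · rw [if_neg h12, if_neg (by simp [Subtype.ext_iff, f.injective.eq_iff, h12])]
  obtain ⟨b, hb⟩ := hwon.exists_orthonormalBasis_extension_of_card_eq
    (by simp [finrank_euclideanSpace])
  set u : J → I → ℝ := fun a i => b (f a) i with hu
  have huon : ∀ a c, ∑ i, u a i * u c i = if a = c then 1 else 0 := by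
    intro a c
    have hob := b.orthonormal
    rw [orthonormal_iff_ite] at hob
    have h := hob (f a) (f c)
    rw [PiLp.inner_apply] at h
    simp only [RCLike.inner_apply, starRingEnd_apply, star_trivial, mul_comm ((b (f c)).ofLp _)] at h
    rw [hu, h]
    by_cases hac : a = c
    · subst hac; simp
    · rw [if_neg (by simp [f.injective.eq_iff, hac]), if_neg hac]
  have hub : ∀ a, σ a ≠ 0 → ∀ i, u a i = u0 a i := by
    intro a ha i
    have hmem : f a ∈ s := ⟨a, ha, rfl⟩
    have h1 : u a i = w (f a) i := by
      show b (f a) i = w (f a) i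
      rw [hb (f a) hmem]
    rw [h1, hw]
    simp only [hinv]
    rw [WithLp.equiv_symm_apply, PiLp.toLp_apply]
  -- the key pointwise identity σ a * u a i = Mv a i
  have hkey2 : ∀ a i, σ a * u a i = Mv a i := by
    intro a i
    by_cases ha : σ a = 0
    · rw [ha, hMv0 a ha]
      simp
    · rw [hub a ha i, hu0]
      simp only [if_neg ha, Pi.smul_apply, smul_eq_mul]
      field_simp
  -- completeness of v
  have hvcomp : ∀ j j', ∑ a, v a j * v a j' = if j = j' then 1 else 0 := by
    intro j j'
    have hx := B.sum_repr (EuclideanSpace.single j' (1 : ℝ))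
    have hxj := congrArg (fun y : EuclideanSpace ℝ J => y j) hx
    simp only at hxj
    rw [EuclideanSpace.single_apply] at hxj
    have hrepr : ∀ a, B.repr (EuclideanSpace.single j' (1 : ℝ)) a = v a j' := by
      intro a
      rw [B.repr_apply_apply, PiLp.inner_apply]
      simp [RCLike.inner_apply, EuclideanSpace.single_apply, starRingEnd_apply]
      rfl
    have hsum : (∑ a, B.repr (EuclideanSpace.single j' (1 : ℝ)) a • B a) j
        = ∑ a, v a j' * v a j := by
      rw [WithLp.ofLp_sum, Finset.sum_apply]
      exact Finset.sum_congr rfl fun a _ => by rw [hrepr a]; simp [hv]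
    rw [hsum] at hxj
    rw [Finset.sum_congr rfl fun a _ => mul_comm (v a j) (v a j')]
    rw [hxj]
  refine ⟨σ, u, v, hσ0, huon, hvon, fun i j => ?_⟩
  have : ∑ a, σ a * u a i * v a j = ∑ a, Mv a i * v a j :=
    Finset.sum_congr rfl fun a _ => by rw [hkey2 a i]
  rw [this]
  have h5 : ∀ a, Mv a i * v a j = ∑ j', M i j' * (v a j' * v a j) := by
    intro a
    rw [hMv]
    simp only [Matrix.mulVec, dotProduct, Finset.sum_mul]
    exact Finset.sum_congr rfl fun j' _ => by ring
  rw [Finset.sum_congr rfl fun a _ => h5 a, Finset.sum_comm]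
  rw [Finset.sum_congr rfl fun j' _ => by rw [← Finset.mul_sum, hvcomp j' j]]
  simp
end svd
lemma svd_min {I J : Type*} [Fintype I] [Fintype J] [DecidableEq I] [DecidableEq J]
    (M : Matrix I J ℝ) (d : ℕ) (hd : d = min (Fintype.card I) (Fintype.card J)) :
    ∃ (σ : Fin d → ℝ) (u : Fin d → I → ℝ) (v : Fin d → J → ℝ),
      (∀ a, 0 ≤ σ a) ∧
      (∀ a b, ∑ i, u a i * u b i = if a = b then 1 else 0) ∧
      (∀ a b, ∑ j, v a j * v b j = if a = b then 1 else 0) ∧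
      (∀ i j, M i j = ∑ a, σ a * u a i * v a j) := by
  classical
  rcases le_total (Fintype.card J) (Fintype.card I) with hJI | hIJ
  · obtain ⟨σ, u, v, h0, hu, hv, hM⟩ := svd_core M hJI
    have hdJ : Fintype.card J = d := by omega
    let e : Fin d ≃ J := (Fintype.equivFinOfCardEq hdJ).symm
    refine ⟨fun a => σ (e a), fun a => u (e a), fun a => v (e a), fun a => h0 _,
      fun a b => by rw [hu (e a) (e b)]; simp [e.injective.eq_iff],
      fun a b => by rw [hv (e a) (e b)]; simp [e.injective.eq_iff],
      fun i j => ?_⟩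
    rw [hM i j, ← Equiv.sum_comp e (fun a => σ a * u a i * v a j)]
  · obtain ⟨σ, u, v, h0, hu, hv, hM⟩ := svd_core Mᵀ hIJ
    have hdI : Fintype.card I = d := by omega
    let e : Fin d ≃ I := (Fintype.equivFinOfCardEq hdI).symm
    refine ⟨fun a => σ (e a), fun a => v (e a), fun a => u (e a), fun a => h0 _,
      fun a b => by rw [hv (e a) (e b)]; simp [e.injective.eq_iff],
      fun a b => by rw [hu (e a) (e b)]; simp [e.injective.eq_iff],
      fun i j => ?_⟩
    have := hM j i
    rw [Matrix.transpose_apply] at this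
    rw [this, ← Equiv.sum_comp e (fun a => σ a * u a j * v a i)]
    exact Finset.sum_congr rfl fun a _ => by ring
lemma sum_mul_delta {ι : Type*} [Fintype ι] [DecidableEq ι] (c : ι → ℂ) (i : ι) :
    ∑ i', c i' * (if i = i' then 1 else 0) = c i := by
  simp [mul_ite]

lemma hsInner_hermBasis_expand {N : ℕ} (x : Fin N × Fin N) (cb : Fin N × Fin N → ℝ) :
    hsInner (hermBasis x) (∑ y, ((cb y : ℝ) : ℂ) • hermBasis y) = ((cb x : ℝ) : ℂ) := by
  rw [hsInner_sum_right,
    Finset.sum_congr rfl fun y _ => by rw [hsInner_smul_right, hermBasis_orthonormal],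
    sum_mul_delta]

lemma kron_sum_sum {n m ι κ : Type*} [Fintype n] [Fintype m] [Fintype ι] [Fintype κ]
    (c : ι → ℂ) (d : κ → ℂ) (G : ι → Matrix n n ℂ) (H : κ → Matrix m m ℂ) :
    (∑ i, c i • G i) ⊗ₖ (∑ j, d j • H j) = ∑ i, ∑ j, (c i * d j) • (G i ⊗ₖ H j) := by
  ext ⟨p1, p2⟩ ⟨q1, q2⟩
  simp only [Matrix.kroneckerMap_apply, Matrix.sum_apply, Matrix.smul_apply, smul_eq_mul]
  rw [Finset.sum_mul_sum]
  exact Finset.sum_congr rfl fun i _ => Finset.sum_congr rfl fun j _ => by ring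

/-- orthonormal families of self-adjoint ops built from real combos of `hermBasis`. -/
lemma combo_hermitian {N : ℕ} (c : Fin N × Fin N → ℝ) :
    (∑ i, ((c i : ℝ) : ℂ) • hermBasis i).IsHermitian := by
  rw [Matrix.IsHermitian]
  simp only [Matrix.conjTranspose_sum, Matrix.conjTranspose_smul, Complex.star_def,
    Complex.conj_ofReal]
  exact Finset.sum_congr rfl fun i _ => by rw [(hermBasis_isHermitian i).eq]

lemma combo_hsInner {N : ℕ} (c d : Fin N × Fin N → ℝ) :
    hsInner (∑ i, ((c i : ℝ) : ℂ) • hermBasis i) (∑ j, ((d j : ℝ) : ℂ) • hermBasis j)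
      = ((∑ i, c i * d i : ℝ) : ℂ) := by
  rw [hsInner_sum_left,
    Finset.sum_congr rfl fun i _ => by
      rw [hsInner_smul_left, hsInner_hermBasis_expand i d, Complex.conj_ofReal]]
  push_cast
  rfl

/-- Every bipartite density operator admits an operator Schmidt decomposition in which the
local orthonormal systems consist of self-adjoint operators; consequently each Schmidt
coefficient is the expectation value of a local observable in the state ρ. -/
theorem stmt2_schmidt_decomposition_selfadjoint {NA NB : ℕ} (hA : 2 ≤ NA) (hB : 2 ≤ NB)
    (ρ : Matrix (Fin NA × Fin NB) (Fin NA × Fin NB) ℂ) (hρ : IsDensity ρ) :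
    ∃ (μ : Fin (min (NA ^ 2) (NB ^ 2)) → ℝ)
      (E : Fin (min (NA ^ 2) (NB ^ 2)) → Matrix (Fin NA) (Fin NA) ℂ)
      (F : Fin (min (NA ^ 2) (NB ^ 2)) → Matrix (Fin NB) (Fin NB) ℂ),
      SchmidtDecomp ρ μ E F ∧
      (∀ a, (E a).IsHermitian) ∧ (∀ a, (F a).IsHermitian) ∧
      (∀ a, (μ a : ℂ) = ((E a ⊗ₖ F a) * ρ).trace) := by
  classical
  haveI : NeZero NA := ⟨by omega⟩
  haveI : NeZero NB := ⟨by omega⟩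
  have hKon : ∀ x y : (Fin NA × Fin NA) × (Fin NB × Fin NB),
      hsInner (hermBasis x.1 ⊗ₖ hermBasis x.2) (hermBasis y.1 ⊗ₖ hermBasis y.2)
        = if x = y then 1 else 0 := by
    intro x y
    rw [hsInner_kronecker, hermBasis_orthonormal, hermBasis_orthonormal]
    by_cases h : x = y
    · subst h; simp
    · rw [if_neg h]
      rcases (not_and_or.mp (by rwa [Prod.ext_iff] at h)) with h' | h'
      · rw [if_neg h', zero_mul]
      · rw [if_neg h', mul_zero]
  have hexp := expand_of_orthonormal
    (fun x : (Fin NA × Fin NA) × (Fin NB × Fin NB) => hermBasis x.1 ⊗ₖ hermBasis x.2)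
    hKon (by simp [Fintype.card_prod]; ring) ρ
  have hherm : ∀ x : (Fin NA × Fin NA) × (Fin NB × Fin NB),
      (hermBasis x.1 ⊗ₖ hermBasis x.2 : Matrix _ _ ℂ).IsHermitian := by
    intro x
    rw [Matrix.IsHermitian, conjTranspose_kron, (hermBasis_isHermitian x.1).eq,
      (hermBasis_isHermitian x.2).eq]
  set M : Matrix (Fin NA × Fin NA) (Fin NB × Fin NB) ℝ :=
    fun i j => (hsInner (hermBasis i ⊗ₖ hermBasis j) ρ).re with hM
  have hreal : ∀ i j, ((M i j : ℝ) : ℂ) = hsInner (hermBasis i ⊗ₖ hermBasis j) ρ := by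
    intro i j
    exact Complex.conj_eq_iff_re.mp (hsInner_real_of_hermitian (hherm (i, j)) hρ.1.1)
  obtain ⟨σ, u, v, hσ0, huon, hvon, hMsvd⟩ := svd_min M (min (NA ^ 2) (NB ^ 2))
    (by simp [Fintype.card_prod, sq])
  refine ⟨σ, fun a => ∑ i, ((u a i : ℝ) : ℂ) • hermBasis i,
    fun a => ∑ j, ((v a j : ℝ) : ℂ) • hermBasis j, ?_, ?_, ?_, ?_⟩
  · -- SchmidtDecomp
    have hEon : ∀ a b, hsInner (∑ i, ((u a i : ℝ) : ℂ) • hermBasis i)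
        (∑ i, ((u b i : ℝ) : ℂ) • hermBasis i) = if a = b then 1 else 0 := by
      intro a b
      rw [combo_hsInner, huon a b]
      split_ifs <;> norm_num
    have hFon : ∀ a b, hsInner (∑ j, ((v a j : ℝ) : ℂ) • hermBasis j)
        (∑ j, ((v b j : ℝ) : ℂ) • hermBasis j) = if a = b then 1 else 0 := by
      intro a b
      rw [combo_hsInner, hvon a b]
      split_ifs <;> norm_num
    refine ⟨hσ0, hEon, hFon, ?_⟩
    have h1 : ∀ a, (σ a : ℂ) • ((∑ i, ((u a i : ℝ) : ℂ) • hermBasis i) ⊗ₖ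
        (∑ j, ((v a j : ℝ) : ℂ) • hermBasis j))
        = ∑ i, ∑ j, ((σ a * u a i * v a j : ℝ) : ℂ) • (hermBasis i ⊗ₖ hermBasis j) := by
      intro a
      rw [kron_sum_sum, Finset.smul_sum]
      refine Finset.sum_congr rfl fun i _ => ?_
      rw [Finset.smul_sum]
      refine Finset.sum_congr rfl fun j _ => ?_
      rw [smul_smul]
      norm_cast
      rw [← mul_assoc]
    rw [Finset.sum_congr rfl fun a _ => h1 a, Finset.sum_comm]
    rw [Finset.sum_congr rfl fun i _ => Finset.sum_comm]
    have h2 : ∀ i j, ∑ a, ((σ a * u a i * v a j : ℝ) : ℂ) • (hermBasis i ⊗ₖ hermBasis j)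
        = hsInner (hermBasis i ⊗ₖ hermBasis j) ρ • (hermBasis i ⊗ₖ hermBasis j) := by
      intro i j
      rw [← Finset.sum_smul, ← hreal i j, hMsvd i j]
      norm_cast
    rw [Finset.sum_congr rfl fun i _ => Finset.sum_congr rfl fun j _ => h2 i j]
    conv_lhs => rw [hexp]
    rw [Fintype.sum_prod_type]
  · exact fun a => combo_hermitian (u a)
  · exact fun a => combo_hermitian (v a)
  · -- expectation values
    intro a
    have hEon : ∀ b c, hsInner (∑ i, ((u b i : ℝ) : ℂ) • hermBasis i)
        (∑ i, ((u c i : ℝ) : ℂ) • hermBasis i) = if b = c then 1 else 0 := by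
      intro b c
      rw [combo_hsInner, huon b c]
      split_ifs <;> norm_num
    have hFon : ∀ b c, hsInner (∑ j, ((v b j : ℝ) : ℂ) • hermBasis j)
        (∑ j, ((v c j : ℝ) : ℂ) • hermBasis j) = if b = c then 1 else 0 := by
      intro b c
      rw [combo_hsInner, hvon b c]
      split_ifs <;> norm_num
    have hXherm : ((∑ i, ((u a i : ℝ) : ℂ) • hermBasis i) ⊗ₖ
        (∑ j, ((v a j : ℝ) : ℂ) • hermBasis j))ᴴ
        = (∑ i, ((u a i : ℝ) : ℂ) • hermBasis i) ⊗ₖ (∑ j, ((v a j : ℝ) : ℂ) • hermBasis j) := by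
      rw [conjTranspose_kron, (combo_hermitian (u a)).eq, (combo_hermitian (v a)).eq]
    have htr : (((∑ i, ((u a i : ℝ) : ℂ) • hermBasis i) ⊗ₖ
        (∑ j, ((v a j : ℝ) : ℂ) • hermBasis j)) * ρ).trace
        = hsInner ((∑ i, ((u a i : ℝ) : ℂ) • hermBasis i) ⊗ₖ
          (∑ j, ((v a j : ℝ) : ℂ) • hermBasis j)) ρ := by
      rw [hsInner, hXherm]
    rw [htr]
    -- expand ρ
    have hdec : ρ = ∑ b, (σ b : ℂ) • ((∑ i, ((u b i : ℝ) : ℂ) • hermBasis i) ⊗ₖ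
        (∑ j, ((v b j : ℝ) : ℂ) • hermBasis j)) := by
      have h1 : ∀ b, (σ b : ℂ) • ((∑ i, ((u b i : ℝ) : ℂ) • hermBasis i) ⊗ₖ
          (∑ j, ((v b j : ℝ) : ℂ) • hermBasis j))
          = ∑ i, ∑ j, ((σ b * u b i * v b j : ℝ) : ℂ) • (hermBasis i ⊗ₖ hermBasis j) := by
        intro b
        rw [kron_sum_sum, Finset.smul_sum]
        refine Finset.sum_congr rfl fun i _ => ?_
        rw [Finset.smul_sum]
        refine Finset.sum_congr rfl fun j _ => ?_
        rw [smul_smul]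
        norm_cast
        rw [← mul_assoc]
      rw [Finset.sum_congr rfl fun b _ => h1 b, Finset.sum_comm]
      rw [Finset.sum_congr rfl fun i _ => Finset.sum_comm]
      have h2 : ∀ i j, ∑ b, ((σ b * u b i * v b j : ℝ) : ℂ) • (hermBasis i ⊗ₖ hermBasis j)
          = hsInner (hermBasis i ⊗ₖ hermBasis j) ρ • (hermBasis i ⊗ₖ hermBasis j) := by
        intro i j
        rw [← Finset.sum_smul, ← hreal i j, hMsvd i j]
        norm_cast
      rw [Finset.sum_congr rfl fun i _ => Finset.sum_congr rfl fun j _ => h2 i j]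
      conv_lhs => rw [hexp]
      rw [Fintype.sum_prod_type]
    conv_rhs => rw [hdec]
    rw [hsInner_sum_right,
      Finset.sum_congr rfl fun b _ => by
        rw [hsInner_smul_right, hsInner_kronecker, hEon a b, hFon a b]]
    have h3 : ∀ b, (σ b : ℂ) * ((if a = b then 1 else 0) * (if a = b then 1 else 0))
        = (σ b : ℂ) * (if a = b then 1 else 0) := fun b => by split_ifs <;> ring
    rw [Finset.sum_congr rfl fun b _ => h3 b, sum_mul_delta (fun b => (σ b : ℂ)) a]
end basics
end

section
/- Let ρ be a separable state on H = H_A ⊗ H_B with operator Schmidt coefficients {μ_a}_{a=1}^{d} and Schmidt rank R (the number of nonzero Schmidt coefficients). Then for every 1 ≤ l ≤ d the elementary symmetric polynomial of degree l satisfies: M^[l](|ρ̃|) ≤ C(R, l) · (1/R)^l if l ≤ R, and M^[l](|ρ̃|) = 0 if l > R. -/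
open scoped Kronecker ComplexOrder
open Matrix Finset

/-- A separable bipartite state: a convex combination of product density operators. -/
def IsSeparableState {NA NB : ℕ} (ρ : Matrix (Fin NA × Fin NB) (Fin NA × Fin NB) ℂ) : Prop :=
  ∃ (m : ℕ) (p : Fin m → ℝ)
    (ρA : Fin m → Matrix (Fin NA) (Fin NA) ℂ) (ρB : Fin m → Matrix (Fin NB) (Fin NB) ℂ),
    (∀ i, 0 < p i) ∧ (∑ i, p i = 1) ∧ (∀ i, IsDensity (ρA i)) ∧ (∀ i, IsDensity (ρB i)) ∧
    ρ = ∑ i, (p i : ℂ) • (ρA i ⊗ₖ ρB i)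

section Helpers

variable {ι : Type*} [DecidableEq ι]

lemma hsInner_sum_smul {n ι : Type*} [Fintype n] (s : Finset ι) (A : Matrix n n ℂ)
    (c : ι → ℂ) (B : ι → Matrix n n ℂ) :
    hsInner A (∑ i ∈ s, c i • B i) = ∑ i ∈ s, c i * hsInner A (B i) := by
  simp [hsInner, Matrix.mul_sum, Matrix.mul_smul, Matrix.trace_smul, smul_eq_mul]

lemma kron_conjTranspose {n m : Type*} [Fintype n] [Fintype m]
    (A : Matrix n n ℂ) (B : Matrix m m ℂ) : (A ⊗ₖ B)ᴴ = Aᴴ ⊗ₖ Bᴴ := by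
  ext ⟨i, j⟩ ⟨k, l⟩
  simp [Matrix.conjTranspose_apply, Matrix.kroneckerMap_apply]

lemma hsInner_kron {n m : Type*} [Fintype n] [Fintype m]
    (A C : Matrix n n ℂ) (B D : Matrix m m ℂ) :
    hsInner (A ⊗ₖ B) (C ⊗ₖ D) = hsInner A C * hsInner B D := by
  rw [hsInner, kron_conjTranspose, ← Matrix.mul_kronecker_mul, Matrix.trace_kronecker]
  rfl

noncomputable def toE {n : Type*} [Fintype n] (A : Matrix n n ℂ) : EuclideanSpace ℂ (n × n) :=
  WithLp.toLp 2 (fun p : n × n => A p.1 p.2)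

lemma inner_toE {n : Type*} [Fintype n] (A B : Matrix n n ℂ) :
    (inner ℂ (toE A) (toE B) : ℂ) = hsInner A B := by
  simp only [toE, PiLp.inner_apply, RCLike.inner_apply, hsInner, Matrix.trace,
    Matrix.diag_apply, Matrix.mul_apply, Matrix.conjTranspose_apply]
  rw [Fintype.sum_prod_type]
  rw [Finset.sum_comm]
  refine Finset.sum_congr rfl fun _ _ => Finset.sum_congr rfl fun _ _ => ?_
  simp [mul_comm]

lemma norm_toE_sq {n : Type*} [Fintype n] (A : Matrix n n ℂ) :
    ‖toE A‖ ^ 2 = (hsInner A A).re := by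
  rw [← inner_toE]
  rw [← RCLike.re_eq_complex_re, ← @inner_self_eq_norm_sq ℂ]

lemma bessel {n ι : Type*} [Fintype n] [Fintype ι] [DecidableEq ι]
    (E : ι → Matrix n n ℂ)
    (hE : ∀ a b, hsInner (E a) (E b) = if a = b then 1 else 0)
    (X : Matrix n n ℂ) :
    ∑ a, ‖hsInner (E a) X‖ ^ 2 ≤ (hsInner X X).re := by
  have hON : Orthonormal ℂ (fun a => toE (E a)) := by
    rw [orthonormal_iff_ite]
    intro a b
    rw [inner_toE, hE a b]
  have h := hON.sum_inner_products_le (s := Finset.univ) (toE X)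
  simp only [inner_toE, norm_toE_sq] at h
  exact h

lemma density_hs_le_one {n : Type*} [Fintype n] [DecidableEq n] {ρ : Matrix n n ℂ}
    (hρ : IsDensity ρ) : (hsInner ρ ρ).re ≤ 1 := by
  obtain ⟨hpsd, htr⟩ := hρ
  have h : ρ.IsHermitian := hpsd.1
  have hUU' : star (Matrix.IsHermitian.eigenvectorUnitary h : Matrix n n ℂ)
      * (Matrix.IsHermitian.eigenvectorUnitary h : Matrix n n ℂ) = 1 :=
    (Matrix.mem_unitaryGroup_iff').mp (Matrix.IsHermitian.eigenvectorUnitary h).2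
  set U : Matrix n n ℂ := (Matrix.IsHermitian.eigenvectorUnitary h : Matrix n n ℂ) with hU
  set lam := h.eigenvalues with hlam
  set D : Matrix n n ℂ := Matrix.diagonal (RCLike.ofReal ∘ lam) with hD
  have hspec : ρ = U * D * star U := h.spectral_theorem
  have cancel : ∀ X : Matrix n n ℂ, star U * (U * X) = X := fun X => by
    rw [← Matrix.mul_assoc, hUU', Matrix.one_mul]
  have hlamnn : ∀ i, 0 ≤ lam i := hpsd.eigenvalues_nonneg
  have htrlam : ∑ i, lam i = 1 := by
    have h1 : ρ.trace = ∑ i, (lam i : ℂ) := by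
      rw [hspec, Matrix.trace_mul_cycle, Matrix.mul_assoc, cancel, hD, Matrix.trace_diagonal]
      rfl
    rw [htr] at h1
    have h2 := congrArg Complex.re h1
    simpa using h2.symm
  have htr2 : (hsInner ρ ρ).re = ∑ i, lam i ^ 2 := by
    have h2 : ρᴴ * ρ = U * (D * D) * star U := by
      rw [h.eq]
      conv_lhs => rw [hspec]
      simp only [Matrix.mul_assoc]
      rw [cancel]
    have h3 : D * D = Matrix.diagonal (fun i => ((lam i ^ 2 : ℝ) : ℂ)) := by
      rw [hD, Matrix.diagonal_mul_diagonal]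
      congr 1
      funext i
      simp [pow_two]
    rw [hsInner, h2, Matrix.trace_mul_cycle, Matrix.mul_assoc, cancel, h3,
      Matrix.trace_diagonal]
    rw [Complex.re_sum]
    simp [← Complex.ofReal_pow]
  rw [htr2]
  calc ∑ i, lam i ^ 2 ≤ ∑ i, lam i * ∑ j, lam j := by
        apply Finset.sum_le_sum
        intro i _
        rw [pow_two]
        exact mul_le_mul_of_nonneg_left
          (Finset.single_le_sum (fun j _ => hlamnn j) (Finset.mem_univ i)) (hlamnn i)
    _ = 1 := by rw [← Finset.sum_mul, htrlam, one_mul]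

/-- Master bijection: summing over (size r+1 subset, element of it) equals
summing over (size r subset, element outside it). -/
lemma master (T : Finset ι) (r : ℕ) (h : ι → Finset ι → ℝ) :
    ∑ s ∈ T.powersetCard (r+1), ∑ i ∈ s, h i s
      = ∑ t ∈ T.powersetCard r, ∑ i ∈ T \ t, h i (insert i t) := by
  rw [Finset.sum_sigma', Finset.sum_sigma']
  apply Finset.sum_nbij' (fun x => (⟨x.1.erase x.2, x.2⟩ : Σ _ : Finset ι, ι))
    (fun x => (⟨insert x.2 x.1, x.2⟩ : Σ _ : Finset ι, ι))
  · rintro ⟨s, i⟩ hs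
    simp only [Finset.mem_sigma, Finset.mem_powersetCard] at hs ⊢
    obtain ⟨⟨hsub, hcard⟩, hi⟩ := hs
    refine ⟨⟨(Finset.erase_subset i s).trans hsub, ?_⟩, ?_⟩
    · rw [Finset.card_erase_of_mem hi, hcard]
      omega
    · rw [Finset.mem_sdiff]
      exact ⟨hsub hi, Finset.notMem_erase i s⟩
  · rintro ⟨t, i⟩ ht
    simp only [Finset.mem_sigma, Finset.mem_powersetCard, Finset.mem_sdiff] at ht ⊢
    obtain ⟨⟨hsub, hcard⟩, hiT, hit⟩ := ht
    refine ⟨⟨Finset.insert_subset hiT hsub, ?_⟩, Finset.mem_insert_self i t⟩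
    rw [Finset.card_insert_of_notMem hit, hcard]
  · rintro ⟨s, i⟩ hs
    simp only [Finset.mem_sigma, Finset.mem_powersetCard] at hs
    simp [Finset.insert_erase hs.2]
  · rintro ⟨t, i⟩ ht
    simp only [Finset.mem_sigma, Finset.mem_powersetCard, Finset.mem_sdiff] at ht
    simp [Finset.erase_insert ht.2.2]
  · rintro ⟨s, i⟩ hs
    simp only [Finset.mem_sigma, Finset.mem_powersetCard] at hs
    rw [Finset.insert_erase hs.2]

variable (x : ι → ℝ)

/-- Elementary symmetric sum over subsets of `T`. -/
noncomputable def esym (T : Finset ι) (k : ℕ) : ℝ :=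
  ∑ s ∈ T.powersetCard k, ∏ a ∈ s, x a

lemma I1 (T : Finset ι) (r : ℕ) :
    ((r : ℝ) + 1) * esym x T (r+1)
      = ∑ t ∈ T.powersetCard r, (∑ i ∈ T \ t, x i) * ∏ a ∈ t, x a := by
  have hm := master T r (fun i s => ∏ a ∈ s, x a)
  have hl : ∑ s ∈ T.powersetCard (r+1), ∑ _i ∈ s, ∏ a ∈ s, x a
      = ((r : ℝ) + 1) * esym x T (r+1) := by
    rw [esym, Finset.mul_sum]
    apply Finset.sum_congr rfl
    intro s hs
    rw [Finset.sum_const, (Finset.mem_powersetCard.mp hs).2]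
    push_cast
    ring
  rw [hl] at hm
  rw [hm]
  apply Finset.sum_congr rfl
  intro t ht
  rw [Finset.sum_mul]
  apply Finset.sum_congr rfl
  intro i hi
  rw [Finset.prod_insert (Finset.mem_sdiff.mp hi).2]

lemma I2 (T : Finset ι) (r : ℕ) :
    ∑ s ∈ T.powersetCard (r+1), (∑ i ∈ s, x i) * ∏ a ∈ s, x a
      = ∑ t ∈ T.powersetCard r, (∑ i ∈ T \ t, x i ^ 2) * ∏ a ∈ t, x a := by
  have hm := master T r (fun i s => x i * ∏ a ∈ s, x a)
  simp only [Finset.sum_mul] at *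
  rw [hm]
  apply Finset.sum_congr rfl
  intro t ht
  apply Finset.sum_congr rfl
  intro i hi
  rw [Finset.prod_insert (Finset.mem_sdiff.mp hi).2, pow_two]
  ring

lemma I3 (T : Finset ι) (m : ℕ) :
    ∑ t ∈ T.powersetCard m, (∑ i ∈ T \ t, ∑ j ∈ (T \ t).erase i, x i * x j) * ∏ a ∈ t, x a
      = ((m : ℝ) + 1) * (((m : ℝ) + 2) * esym x T (m+2)) := by
  have hm := (master T m (fun i s => (∑ j ∈ T \ s, x j) * ∏ a ∈ s, x a)).symm
  have hl : ∑ t ∈ T.powersetCard m, ∑ i ∈ T \ t,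
        (∑ j ∈ T \ insert i t, x j) * ∏ a ∈ insert i t, x a
      = ∑ t ∈ T.powersetCard m, (∑ i ∈ T \ t, ∑ j ∈ (T \ t).erase i, x i * x j) * ∏ a ∈ t, x a := by
    apply Finset.sum_congr rfl
    intro t ht
    rw [Finset.sum_mul]
    apply Finset.sum_congr rfl
    intro i hi
    rw [Finset.sdiff_insert, Finset.prod_insert (Finset.mem_sdiff.mp hi).2, Finset.sum_mul,
      Finset.sum_mul]
    apply Finset.sum_congr rfl
    intro j _
    ring
  rw [← hl, hm]
  have hr : ∑ s ∈ T.powersetCard (m+1), ∑ _i ∈ s, (∑ j ∈ T \ s, x j) * ∏ a ∈ s, x a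
      = ((m : ℝ) + 1) * ∑ s ∈ T.powersetCard (m+1), (∑ j ∈ T \ s, x j) * ∏ a ∈ s, x a := by
    rw [Finset.mul_sum]
    apply Finset.sum_congr rfl
    intro s hs
    rw [Finset.sum_const, (Finset.mem_powersetCard.mp hs).2]
    push_cast
    ring
  rw [hr, ← I1 x T (m+1)]
  push_cast
  ring

lemma pairCS (U : Finset ι) (y : ι → ℝ) :
    ∑ i ∈ U, ∑ j ∈ U.erase i, y i * y j ≤ ((U.card : ℝ) - 1) * ∑ i ∈ U, y i ^ 2 := by
  have hsq : (∑ i ∈ U, y i) ^ 2 ≤ (U.card : ℝ) * ∑ i ∈ U, y i ^ 2 :=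
    sq_sum_le_card_mul_sum_sq
  have hexp : (∑ i ∈ U, y i) ^ 2 = (∑ i ∈ U, y i ^ 2) + ∑ i ∈ U, ∑ j ∈ U.erase i, y i * y j := by
    rw [pow_two, Finset.sum_mul_sum, ← Finset.sum_add_distrib]
    apply Finset.sum_congr rfl
    intro i hi
    rw [← Finset.add_sum_erase _ _ hi, pow_two]
  linarith

/-- The key step: `(m+2) * |T| * e_{m+2} ≤ (|T| - (m+1)) * S * e_{m+1}`. -/
lemma step (T : Finset ι) (m : ℕ) (hm : m + 2 ≤ T.card) (hx : ∀ i, 0 ≤ x i) :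
    ((m : ℝ) + 2) * T.card * esym x T (m+2)
      ≤ ((T.card : ℝ) - (m+1)) * (∑ i ∈ T, x i) * esym x T (m+1) := by
  have hP : ((m : ℝ) + 1) * (((m : ℝ) + 2) * esym x T (m+2))
      ≤ ((T.card : ℝ) - (m+1)) *
          ∑ t ∈ T.powersetCard m, (∑ i ∈ T \ t, x i ^ 2) * ∏ a ∈ t, x a := by
    rw [← I3 x T m, Finset.mul_sum]
    apply Finset.sum_le_sum
    intro t ht
    obtain ⟨hsub, hcard⟩ := Finset.mem_powersetCard.mp ht
    have hUcard : ((T \ t).card : ℝ) = (T.card : ℝ) - m := by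
      rw [Finset.card_sdiff_of_subset hsub, hcard]
      have : m ≤ T.card := by omega
      push_cast [Nat.cast_sub this]
      ring
    have hpair := pairCS (T \ t) x
    rw [hUcard] at hpair
    have hprod : (0:ℝ) ≤ ∏ a ∈ t, x a := Finset.prod_nonneg fun a _ => hx a
    calc (∑ i ∈ T \ t, ∑ j ∈ (T \ t).erase i, x i * x j) * ∏ a ∈ t, x a
        ≤ (((T.card : ℝ) - m - 1) * ∑ i ∈ T \ t, x i ^ 2) * ∏ a ∈ t, x a :=
          mul_le_mul_of_nonneg_right (by linarith [hpair]) hprod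
      _ = ((T.card : ℝ) - (m+1)) * ((∑ i ∈ T \ t, x i ^ 2) * ∏ a ∈ t, x a) := by ring
  have hsplit : (∑ i ∈ T, x i) * esym x T (m+1)
      = ((m : ℝ) + 2) * esym x T (m+2)
        + ∑ t ∈ T.powersetCard m, (∑ i ∈ T \ t, x i ^ 2) * ∏ a ∈ t, x a := by
    rw [← I2 x T m]
    have : ∀ s ∈ T.powersetCard (m+1),
        (∑ i ∈ T, x i) * ∏ a ∈ s, x a
          = (∑ i ∈ T \ s, x i) * ∏ a ∈ s, x a + (∑ i ∈ s, x i) * ∏ a ∈ s, x a := by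
      intro s hs
      rw [← add_mul, Finset.sum_sdiff (Finset.mem_powersetCard.mp hs).1]
    rw [esym, Finset.mul_sum]
    rw [Finset.sum_congr rfl this, Finset.sum_add_distrib]
    congr 1
    have hI1 := I1 x T (m+1)
    rw [show m+1+1 = m+2 from rfl] at hI1
    rw [← hI1]
    push_cast
    ring
  have hQnn : ((m : ℝ) + 1) * (((m : ℝ) + 2) * esym x T (m+2))
      ≤ ((T.card : ℝ) - (m+1)) *
        ((∑ i ∈ T, x i) * esym x T (m+1) - ((m : ℝ) + 2) * esym x T (m+2)) := by
    rw [hsplit]; ring_nf; ring_nf at hP; linarith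
  have hTm : ((m : ℝ) + 1) ≤ (T.card : ℝ) - 1 := by
    have : (m : ℝ) + 2 ≤ (T.card : ℝ) := by exact_mod_cast hm
    linarith
  nlinarith [hQnn]

lemma maclaurin (T : Finset ι) (hx : ∀ i, 0 ≤ x i) :
    ∀ l : ℕ, l ≤ T.card →
      esym x T l ≤ (T.card.choose l : ℝ) * ((∑ i ∈ T, x i) / T.card) ^ l := by
  have hS0 : (0:ℝ) ≤ ∑ i ∈ T, x i := Finset.sum_nonneg fun i _ => hx i
  intro l
  induction l with
  | zero => intro _; simp [esym]
  | succ k ih =>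
    intro hk1
    have hTpos : (0:ℝ) < T.card := by
      have h1 : 1 ≤ T.card := le_trans (Nat.succ_le_succ (Nat.zero_le k)) hk1
      exact_mod_cast Nat.lt_of_lt_of_le Nat.zero_lt_one h1
    have hTne : (T.card : ℝ) ≠ 0 := ne_of_gt hTpos
    match k, ih, hk1 with
    | 0, _, hk1 =>
      have he : esym x T 1 = ∑ i ∈ T, x i := by
        rw [esym, Finset.powersetCard_one, Finset.sum_map]
        simp
      rw [he, Nat.choose_one_right, pow_one]
      rw [mul_div_assoc']
      rw [mul_comm, mul_div_assoc, div_self hTne, mul_one]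
    | Nat.succ m, ih, hk1 =>
      have ihm := ih (by omega)
      have h1 := step x T m (by omega) hx
      set S := ∑ i ∈ T, x i with hs
      set N := (T.card : ℝ) with hN
      show esym x T (m+2) ≤ (T.card.choose (m+2) : ℝ) * (S / N) ^ (m+2)
      have hch : ((T.card.choose (m+2) : ℝ)) * ((m:ℝ)+2)
          = (T.card.choose (m+1) : ℝ) * (N - ((m:ℝ)+1)) := by
        have := Nat.choose_succ_right_eq T.card (m+1)
        have hcast := congrArg (fun z : ℕ => (z : ℝ)) this
        push_cast [Nat.cast_sub (show m+1 ≤ T.card by omega)] at hcast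
        convert hcast using 2 <;> push_cast <;> ring
      have hkey : N * (S/N)^(m+2) = S * (S/N)^(m+1) := by
        rw [pow_succ, ← mul_assoc, mul_comm N ((S/N)^(m+1)), mul_assoc,
          mul_comm N (S/N), div_mul_cancel₀ _ hTne, mul_comm]
      have hNm : (0:ℝ) ≤ N - ((m:ℝ)+1) := by
        have h2 : m + 2 ≤ T.card := by omega
        have : ((m:ℝ)+2) ≤ N := by rw [hN]; exact_mod_cast h2
        linarith
      have hmono : (N - ((m:ℝ)+1)) * S * esym x T (m+1)
          ≤ (N - ((m:ℝ)+1)) * S * ((T.card.choose (m+1) : ℝ) * (S/N)^(m+1)) :=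
        mul_le_mul_of_nonneg_left ihm (mul_nonneg hNm hS0)
      have heq : (N - ((m:ℝ)+1)) * S * ((T.card.choose (m+1) : ℝ) * (S/N)^(m+1))
          = ((m:ℝ)+2) * N * ((T.card.choose (m+2) : ℝ) * (S/N)^(m+2)) := by
        calc (N - ((m:ℝ)+1)) * S * ((T.card.choose (m+1) : ℝ) * (S/N)^(m+1))
            = ((T.card.choose (m+1) : ℝ) * (N - ((m:ℝ)+1))) * (S * (S/N)^(m+1)) := by ring
          _ = ((T.card.choose (m+2) : ℝ) * ((m:ℝ)+2)) * (S * (S/N)^(m+1)) := by rw [hch]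
          _ = ((T.card.choose (m+2) : ℝ) * ((m:ℝ)+2)) * (N * (S/N)^(m+2)) := by rw [hkey]
          _ = ((m:ℝ)+2) * N * ((T.card.choose (m+2) : ℝ) * (S/N)^(m+2)) := by ring
      have hpos : (0:ℝ) < ((m:ℝ)+2) * N := by positivity
      rw [← mul_le_mul_iff_right₀ hpos]
      calc ((m:ℝ)+2) * N * esym x T (m+2)
          ≤ (N - ((m:ℝ)+1)) * S * esym x T (m+1) := h1
        _ ≤ (N - ((m:ℝ)+1)) * S * ((T.card.choose (m+1) : ℝ) * (S/N)^(m+1)) := hmono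
        _ = ((m:ℝ)+2) * N * ((T.card.choose (m+2) : ℝ) * (S/N)^(m+2)) := heq

lemma reduce {ι : Type*} [Fintype ι] [DecidableEq ι] (μ : ι → ℝ)
    (T : Finset ι) (hT : T = Finset.univ.filter (fun a => μ a ≠ 0)) (l : ℕ) :
    ∑ s ∈ Finset.univ.powersetCard l, ∏ a ∈ s, μ a = esym μ T l := by
  rw [esym]
  symm
  apply Finset.sum_subset (Finset.powersetCard_mono (Finset.subset_univ T))
  intro s hs hns
  have hnsub : ¬ s ⊆ T := fun hsub =>
    hns (Finset.mem_powersetCard.mpr ⟨hsub, (Finset.mem_powersetCard.mp hs).2⟩)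
  obtain ⟨i, hi, hiT⟩ := Finset.not_subset.mp hnsub
  apply Finset.prod_eq_zero hi
  by_contra h0
  exact hiT (hT ▸ Finset.mem_filter.mpr ⟨Finset.mem_univ i, h0⟩)

lemma sum_mu_le_one {NA NB : ℕ}
    (ρ : Matrix (Fin NA × Fin NB) (Fin NA × Fin NB) ℂ)
    (hsep : IsSeparableState ρ)
    (μ : Fin (min (NA ^ 2) (NB ^ 2)) → ℝ)
    (E : Fin (min (NA ^ 2) (NB ^ 2)) → Matrix (Fin NA) (Fin NA) ℂ)
    (F : Fin (min (NA ^ 2) (NB ^ 2)) → Matrix (Fin NB) (Fin NB) ℂ)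
    (hS : SchmidtDecomp ρ μ E F) : ∑ a, μ a ≤ 1 := by
  obtain ⟨m, p, ρA, ρB, hp, hp1, hDA, hDB, hρeq⟩ := hsep
  obtain ⟨hμ0, hE, hF, hdecomp⟩ := hS
  -- μ a as an inner product with ρ
  have hmu : ∀ a, (μ a : ℂ) = hsInner (E a ⊗ₖ F a) ρ := by
    intro a
    rw [hdecomp, hsInner_sum_smul]
    rw [Finset.sum_eq_single a]
    · rw [hsInner_kron, hE a a, hF a a]; simp
    · intro b _ hba
      rw [hsInner_kron, hE a b, hF a b]
      simp [Ne.symm hba]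
    · simp
  have hmu2 : ∀ a, (μ a : ℂ)
      = ∑ i, (p i : ℂ) * (hsInner (E a) (ρA i) * hsInner (F a) (ρB i)) := by
    intro a
    rw [hmu a, hρeq, hsInner_sum_smul]
    congr 1
    funext i
    rw [hsInner_kron]
  -- pointwise bound
  have hmu3 : ∀ a, μ a ≤ ∑ i, p i * (‖hsInner (E a) (ρA i)‖ * ‖hsInner (F a) (ρB i)‖) := by
    intro a
    have h1 : μ a = (∑ i, (p i : ℂ) * (hsInner (E a) (ρA i) * hsInner (F a) (ρB i))).re := by
      rw [← hmu2 a, Complex.ofReal_re]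
    rw [h1, Complex.re_sum]
    apply Finset.sum_le_sum
    intro i _
    rw [Complex.re_ofReal_mul]
    apply mul_le_mul_of_nonneg_left _ (hp i).le
    calc (hsInner (E a) (ρA i) * hsInner (F a) (ρB i)).re
        ≤ ‖hsInner (E a) (ρA i) * hsInner (F a) (ρB i)‖ := Complex.re_le_norm _
      _ = ‖hsInner (E a) (ρA i)‖ * ‖hsInner (F a) (ρB i)‖ := norm_mul _ _
  -- Cauchy-Schwarz + Bessel per i
  have hCS : ∀ i, ∑ a, ‖hsInner (E a) (ρA i)‖ * ‖hsInner (F a) (ρB i)‖ ≤ 1 := by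
    intro i
    have hA : ∑ a, ‖hsInner (E a) (ρA i)‖ ^ 2 ≤ 1 :=
      le_trans (bessel E hE (ρA i)) (density_hs_le_one (hDA i))
    have hB : ∑ a, ‖hsInner (F a) (ρB i)‖ ^ 2 ≤ 1 :=
      le_trans (bessel F hF (ρB i)) (density_hs_le_one (hDB i))
    have hcs := Finset.sum_mul_sq_le_sq_mul_sq Finset.univ
      (fun a => ‖hsInner (E a) (ρA i)‖) (fun a => ‖hsInner (F a) (ρB i)‖)
    have hnn : 0 ≤ ∑ a, ‖hsInner (E a) (ρA i)‖ * ‖hsInner (F a) (ρB i)‖ :=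
      Finset.sum_nonneg fun a _ => mul_nonneg (norm_nonneg _) (norm_nonneg _)
    nlinarith [Finset.sum_nonneg (fun a (_ : a ∈ Finset.univ) =>
      sq_nonneg ‖hsInner (E a) (ρA i)‖)]
  calc ∑ a, μ a ≤ ∑ a, ∑ i, p i * (‖hsInner (E a) (ρA i)‖ * ‖hsInner (F a) (ρB i)‖) :=
        Finset.sum_le_sum fun a _ => hmu3 a
    _ = ∑ i, p i * ∑ a, ‖hsInner (E a) (ρA i)‖ * ‖hsInner (F a) (ρB i)‖ := by
        rw [Finset.sum_comm]
        congr 1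
        funext i
        rw [Finset.mul_sum]
    _ ≤ ∑ i, p i * 1 := Finset.sum_le_sum fun i _ =>
        mul_le_mul_of_nonneg_left (hCS i) (hp i).le
    _ = 1 := by simp [hp1]

end Helpers

/-- Refinement of the symmetric-polynomial bounds taking the Schmidt rank R into account:
for a separable state, M^[l] ≤ C(R,l)(1/R)^l if l ≤ R, and M^[l] = 0 if l > R. -/
theorem stmt11_esymm_schmidt_rank_bound {NA NB : ℕ} (hA : 2 ≤ NA) (hB : 2 ≤ NB)
    (ρ : Matrix (Fin NA × Fin NB) (Fin NA × Fin NB) ℂ)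
    (hsep : IsSeparableState ρ)
    (μ : Fin (min (NA ^ 2) (NB ^ 2)) → ℝ)
    (E : Fin (min (NA ^ 2) (NB ^ 2)) → Matrix (Fin NA) (Fin NA) ℂ)
    (F : Fin (min (NA ^ 2) (NB ^ 2)) → Matrix (Fin NB) (Fin NB) ℂ)
    (hS : SchmidtDecomp ρ μ E F)
    (R : ℕ) (hR : R = (Finset.univ.filter (fun a => μ a ≠ 0)).card) :
    ∀ l : ℕ, 1 ≤ l → l ≤ min (NA ^ 2) (NB ^ 2) →
      (l ≤ R →
        ∑ s ∈ Finset.univ.powersetCard l, ∏ a ∈ s, μ a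
          ≤ (R.choose l : ℝ) * (1 / (R : ℝ)) ^ l) ∧
      (R < l → ∑ s ∈ Finset.univ.powersetCard l, ∏ a ∈ s, μ a = 0) := by
  have hμ0 : ∀ a, 0 ≤ μ a := hS.1
  set T : Finset (Fin (min (NA ^ 2) (NB ^ 2))) :=
    Finset.univ.filter (fun a => μ a ≠ 0) with hT
  have hsum : ∑ a, μ a ≤ 1 := sum_mu_le_one ρ hsep μ E F hS
  have hST : ∑ i ∈ T, μ i = ∑ a, μ a := by
    rw [hT]; exact Finset.sum_filter_ne_zero _
  have hS1 : ∑ i ∈ T, μ i ≤ 1 := by rw [hST]; exact hsum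
  have hS0 : (0:ℝ) ≤ ∑ i ∈ T, μ i := Finset.sum_nonneg fun i _ => hμ0 i
  intro l hl1 _hld
  constructor
  · intro hlR
    have hlT : l ≤ T.card := by rw [← hR]; exact hlR
    have hTpos : (0:ℝ) < T.card := by
      have h1 : 1 ≤ T.card := le_trans hl1 hlT
      exact_mod_cast Nat.lt_of_lt_of_le Nat.zero_lt_one h1
    rw [reduce μ T hT l]
    refine le_trans (maclaurin μ T hμ0 l hlT) ?_
    rw [hR]
    have hbase : (∑ i ∈ T, μ i) / (T.card : ℝ) ≤ 1 / (T.card : ℝ) := by gcongr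
    have hbase0 : (0:ℝ) ≤ (∑ i ∈ T, μ i) / (T.card : ℝ) :=
      div_nonneg hS0 (le_of_lt hTpos)
    gcongr
  · intro hRl
    rw [reduce μ T hT l]
    rw [esym, Finset.powersetCard_eq_empty.mpr (by omega : T.card < l), Finset.sum_empty]
end
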